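/- arXiv:1402.3560 — 2 statements merged into one kernel-verified Lean document; each statement's English description precedes it below -/
import Mathlib

section
/- Under the technical condition p − a + ρb(μ−r)/σ > λγ, the equation (1−γκ)^(α−1) + B₁(1−γκ) + C₁ = 0, with B₁ = (α−1)b²(1−ρ²)/(λγ²) and C₁ = −(1/(λγ))[p−a+ρb(μ−r)/σ + (α−1)b²(1−ρ²)/γ], has a unique solution κ ∈ (0, 1/γ). -/
theorem power_utility_unique_kappa (α b lam γ ρ σ μ r p a : ℝ)
    (hα : α ∈ Set.Ioo (0 : ℝ) 1) (hb : 0 < b) (hlam : 0 < lam) (hγ : 0 < γ)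
    (hρ : ρ ∈ Set.Ioo (-1 : ℝ) 0) (hσ : 0 < σ) (hr : 0 ≤ r) (hμ : r < μ)
    (hpa : a < p)
    (htech : p - a + ρ*b*(μ - r)/σ > lam*γ) :
    ∃! κ : ℝ, κ ∈ Set.Ioo (0 : ℝ) (1/γ) ∧
      (1 - γ*κ) ^ (α - 1)
        + ((α - 1)*b^2*(1 - ρ^2)/(lam*γ^2)) * (1 - γ*κ)
        + (-(1/(lam*γ)) * (p - a + ρ*b*(μ - r)/σ + (α - 1)*b^2*(1 - ρ^2)/γ)) = 0 := by
  obtain ⟨hα0, hα1⟩ := hα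
  obtain ⟨hρ1, hρ0⟩ := hρ
  set T : ℝ := p - a + ρ*b*(μ - r)/σ with hT
  set B : ℝ := (α - 1)*b^2*(1 - ρ^2)/(lam*γ^2) with hB
  set C : ℝ := -(1/(lam*γ)) * (T + (α - 1)*b^2*(1 - ρ^2)/γ) with hC
  have hρ2 : ρ^2 < 1 := by nlinarith
  have hBneg : B < 0 := by
    apply div_neg_of_neg_of_pos
    · exact mul_neg_of_neg_of_pos (mul_neg_of_neg_of_pos (by linarith) (by positivity))
        (by linarith)
    · positivity
  have hlamγ : 0 < lam*γ := by positivity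
  have hBC : B + C = -(T/(lam*γ)) := by
    rw [hB, hC]; field_simp; ring
  set c : ℝ := T/(lam*γ) with hc
  have hc1 : 1 < c := (one_lt_div hlamγ).mpr htech
  have he : α - 1 < 0 := by linarith
  set g : ℝ → ℝ := fun φ => φ ^ (α - 1) + B * φ + C with hg
  -- g is strictly decreasing on (0, ∞)
  have hmono : ∀ x y : ℝ, 0 < x → x < y → g y < g x := by
    intro x y hx hxy
    have h1 : y ^ (α - 1) < x ^ (α - 1) := Real.rpow_lt_rpow_of_neg hx hxy he
    have h2 : B * y < B * x := by nlinarith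
    simp only [hg]; linarith
  -- values at endpoints
  set φ₀ : ℝ := c ^ (1/(α-1)) with hφ₀
  have hφ₀pos : 0 < φ₀ := Real.rpow_pos_of_pos (by linarith) _
  have hφ₀lt1 : φ₀ < 1 :=
    Real.rpow_lt_one_of_one_lt_of_neg hc1 (div_neg_of_pos_of_neg one_pos he)
  have hφ₀pow : φ₀ ^ (α - 1) = c := by
    rw [hφ₀, ← Real.rpow_mul (by linarith : (0:ℝ) ≤ c),
      one_div_mul_cancel (by linarith : α - 1 ≠ 0), Real.rpow_one]
  have hg0 : 0 < g φ₀ := by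
    have : g φ₀ = B * (φ₀ - 1) := by
      simp only [hg, hφ₀pow]
      have : B + C = -c := hBC
      linarith
    rw [this]; nlinarith
  have hg1 : g 1 < 0 := by
    simp only [hg, Real.one_rpow, mul_one]
    have : B + C = -c := hBC
    linarith
  -- continuity on [φ₀, 1]
  have hcont : ContinuousOn g (Set.Icc φ₀ 1) := by
    apply ContinuousOn.add
    apply ContinuousOn.add
    · intro x hx
      exact (Real.continuousAt_rpow_const x (α-1)
        (Or.inl (ne_of_gt (lt_of_lt_of_le hφ₀pos hx.1)))).continuousWithinAt
    · exact (continuous_const.mul continuous_id).continuousOn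
    · exact continuousOn_const
  have hsub : Set.Ioo (g 1) (g φ₀) ⊆ g '' Set.Ioo φ₀ 1 :=
    intermediate_value_Ioo' (le_of_lt hφ₀lt1) hcont
  obtain ⟨φ, hφmem, hφval⟩ := hsub ⟨hg1, hg0⟩
  have hφpos : 0 < φ := lt_trans hφ₀pos hφmem.1
  have hφlt1 : φ < 1 := hφmem.2
  refine ⟨(1 - φ)/γ, ⟨⟨div_pos (by linarith) hγ, ?_⟩, ?_⟩, ?_⟩
  · rw [div_lt_div_iff₀ hγ hγ]; nlinarith
  · have h : 1 - γ * ((1 - φ)/γ) = φ := by field_simp; ring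
    rw [h]
    simpa [hg] using hφval
  · rintro κ ⟨⟨hκ0, hκ1⟩, hκval⟩
    have hψpos : 0 < 1 - γ*κ := by
      have h1 : γ*κ < 1 := by rw [mul_comm]; exact (lt_div_iff₀ hγ).mp hκ1
      linarith
    have hψlt : 1 - γ*κ < 1 := by have := mul_pos hγ hκ0; linarith
    have hκg : g (1 - γ*κ) = 0 := by simpa [hg] using hκval
    have hφg : g φ = 0 := hφval
    have heq : 1 - γ*κ = φ := by
      rcases lt_trichotomy (1 - γ*κ) φ with h | h | h
      · exact absurd (hmono _ _ hψpos h) (by rw [hκg, hφg]; simp)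
      · exact h
      · exact absurd (hmono _ _ hφpos h) (by rw [hκg, hφg]; simp)
    have : γ * κ = γ * ((1 - φ)/γ) := by field_simp; linarith
    exact mul_left_cancel₀ (ne_of_gt hγ) this
end

section
/- If a strictly positive solution κ* ∈ [0, 1/γ) to the first-order conditions exists under the technical condition C(t) > 0, then it equals the smaller root κ₋(t) = (B(t) − √Δ(t))/(2A), and moreover the resulting investment proportion π*(t) = (μ(t)−r(t)+ρbσ(t)κ*(t))/σ²(t) is a bounded function of t whenever μ, r, σ are bounded and σ is bounded away from 0. -/
lemma aux_smaller_root (A B C g lam κ : ℝ) (hA : 0 < A) (hg : 0 < g) (hlam : 0 < lam)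
    (hval : A*g^2 - B*g + C = -lam*g) (hκg : κ < g)
    (hq : A*κ^2 - B*κ + C = 0) :
    κ = (B - Real.sqrt (B^2 - 4*A*C)) / (2*A) := by
  have h2 : 2*A*κ ≤ B := by
    nlinarith [mul_pos hA (sub_pos.mpr hκg), mul_pos hlam hg,
      mul_pos (mul_pos hA (sub_pos.mpr hκg)) (sub_pos.mpr hκg)]
  have hΔ : B^2 - 4*A*C = (B - 2*A*κ)^2 := by linear_combination (-4*A) * hq
  rw [hΔ, Real.sqrt_sq (by linarith)]
  field_simp
  ring

set_option maxHeartbeats 1600000 in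
theorem solution_is_smaller_root_and_pi_bounded
    (b γ lam ρ p a T σ₀ Mb : ℝ) (μ r σ : ℝ → ℝ)
    (hb : 0 < b) (hγ : 0 < γ) (hlam : 0 < lam) (hρ : ρ ∈ Set.Ioo (-1 : ℝ) 1)
    (hpa : a < p) (hT : 0 < T) (hσ₀ : 0 < σ₀)
    (hbdd : ∀ t ∈ Set.Icc (0 : ℝ) T,
      0 < r t ∧ r t < μ t ∧ μ t ≤ Mb ∧ σ₀ ≤ σ t ∧ σ t ≤ Mb)
    (hC : ∀ t ∈ Set.Icc (0 : ℝ) T,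
      0 < p - a + ρ*b*(μ t - r t)/σ t - lam*γ) :
    (∀ t ∈ Set.Icc (0 : ℝ) T, ∀ κ : ℝ, 0 ≤ κ → κ < 1/γ →
      (b^2*(1-ρ^2)*γ)*κ^2
        - (b^2*(1-ρ^2) + γ*((p - a + ρ*b*(μ t - r t)/σ t - lam*γ) + lam*γ))*κ
        + (p - a + ρ*b*(μ t - r t)/σ t - lam*γ) = 0 →
      κ = ((b^2*(1-ρ^2) + γ*((p - a + ρ*b*(μ t - r t)/σ t - lam*γ) + lam*γ))
            - Real.sqrt ((b^2*(1-ρ^2) + γ*((p - a + ρ*b*(μ t - r t)/σ t - lam*γ) + lam*γ))^2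
                - 4*(b^2*(1-ρ^2)*γ)*(p - a + ρ*b*(μ t - r t)/σ t - lam*γ)))
          / (2*(b^2*(1-ρ^2)*γ))) ∧
    (∃ M' : ℝ, ∀ t ∈ Set.Icc (0 : ℝ) T,
      |(μ t - r t + ρ*b*σ t *
          (((b^2*(1-ρ^2) + γ*((p - a + ρ*b*(μ t - r t)/σ t - lam*γ) + lam*γ))
            - Real.sqrt ((b^2*(1-ρ^2) + γ*((p - a + ρ*b*(μ t - r t)/σ t - lam*γ) + lam*γ))^2
                - 4*(b^2*(1-ρ^2)*γ)*(p - a + ρ*b*(μ t - r t)/σ t - lam*γ)))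
          / (2*(b^2*(1-ρ^2)*γ)))) / (σ t)^2| ≤ M') := by
  obtain ⟨hρ1, hρ2⟩ := hρ
  have h12 : (0:ℝ) < (1-ρ)*(1+ρ) := mul_pos (by linarith) (by linarith)
  have hu : 0 < b^2*(1-ρ^2) := by nlinarith [mul_pos (mul_pos hb hb) h12]
  have hA : 0 < b^2*(1-ρ^2)*γ := mul_pos hu hγ
  constructor
  · intro t ht κ hκ0 hκγ hq
    apply aux_smaller_root _ _ _ (1/γ) (lam*γ^2) κ hA (by positivity)
      (by positivity) ?_ hκγ hq
    have hγ' : γ ≠ 0 := ne_of_gt hγ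
    field_simp
    ring
  · refine ⟨(Mb + b*Mb*((b^2*(1-ρ^2) + γ*(p - a + b*Mb/σ₀))
      /(2*(b^2*(1-ρ^2)*γ))))/σ₀^2, ?_⟩
    intro t ht
    obtain ⟨hr0, hrμ, hμM, hσ0, hσM⟩ := hbdd t ht
    have hCt := hC t ht
    set Cc := p - a + ρ*b*(μ t - r t)/σ t - lam*γ with hCc'
    set Bt := b^2*(1-ρ^2) + γ*(Cc + lam*γ) with hBt'
    have hBtpos : 0 < Bt := by
      have h1 : 0 < γ*(Cc + lam*γ) := mul_pos hγ (by nlinarith [mul_pos hlam hγ])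
      rw [hBt']; linarith
    set s := Real.sqrt (Bt^2 - 4*(b^2*(1-ρ^2)*γ)*Cc) with hs'
    have hs0 : 0 ≤ s := Real.sqrt_nonneg _
    have hsB : s ≤ Bt := by
      rw [hs']
      calc Real.sqrt (Bt^2 - 4*(b^2*(1-ρ^2)*γ)*Cc) ≤ Real.sqrt (Bt^2) := by
            apply Real.sqrt_le_sqrt
            nlinarith [mul_pos hA hCt]
        _ = Bt := Real.sqrt_sq hBtpos.le
    set κ := (Bt - s)/(2*(b^2*(1-ρ^2)*γ)) with hκ'
    set K := (b^2*(1-ρ^2) + γ*(p - a + b*Mb/σ₀))/(2*(b^2*(1-ρ^2)*γ)) with hK'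
    have h2A : 0 < 2*(b^2*(1-ρ^2)*γ) := by positivity
    have hκ0 : 0 ≤ κ := by
      rw [hκ']; apply div_nonneg (by linarith) h2A.le
    have hσt : 0 < σ t := lt_of_lt_of_le hσ₀ hσ0
    have hMb : 0 < Mb := lt_of_lt_of_le hσ₀ (le_trans hσ0 hσM)
    have hdiv : (μ t - r t)/σ t ≤ Mb/σ₀ :=
      div_le_div₀ hMb.le (by linarith) hσ₀ hσ0
    have hdiv0 : 0 ≤ (μ t - r t)/σ t := div_nonneg (by linarith) hσt.le
    have hCbd : Cc + lam*γ ≤ p - a + b*Mb/σ₀ := by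
      rw [hCc']
      have hrw : ρ*b*(μ t - r t)/σ t = ρ*(b*((μ t - r t)/σ t)) := by ring
      rw [hrw]
      have h1 : ρ*(b*((μ t - r t)/σ t)) ≤ b*((μ t - r t)/σ t) := by
        nlinarith [mul_nonneg hb.le hdiv0]
      have h2 : b*((μ t - r t)/σ t) ≤ b*(Mb/σ₀) := mul_le_mul_of_nonneg_left hdiv hb.le
      have h3 : b*(Mb/σ₀) = b*Mb/σ₀ := by ring
      linarith
    have hBbd : Bt ≤ b^2*(1-ρ^2) + γ*(p - a + b*Mb/σ₀) := by
      rw [hBt']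
      have := mul_le_mul_of_nonneg_left hCbd hγ.le
      linarith
    have hκK : κ ≤ K := by
      rw [hκ', hK']
      exact (div_le_div_iff_of_pos_right h2A).mpr (by linarith)
    have hK0 : 0 ≤ K := le_trans hκ0 hκK
    clear_value Cc Bt s κ K
    clear hκ' hK' hs' hCc' hBt' hdiv hdiv0 hCbd hBbd hCt hC hbdd hsB hs0 hBtpos
    have hbσκ : 0 ≤ b*σ t*κ := mul_nonneg (mul_nonneg hb.le hσt.le) hκ0
    have e1 : ρ*b*σ t*κ ≤ b*σ t*κ := by
      nlinarith [mul_nonneg (by linarith : (0:ℝ) ≤ 1-ρ) hbσκ]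
    have e1' : -(b*σ t*κ) ≤ ρ*b*σ t*κ := by
      nlinarith [mul_nonneg (by linarith : (0:ℝ) ≤ 1+ρ) hbσκ]
    have e2 : b*σ t*κ ≤ b*Mb*κ := by
      nlinarith [mul_nonneg (mul_nonneg hb.le hκ0) (by linarith : (0:ℝ) ≤ Mb - σ t)]
    have e3 : b*Mb*κ ≤ b*Mb*K :=
      mul_le_mul_of_nonneg_left hκK (by positivity)
    have hnum : |μ t - r t + ρ*b*σ t*κ| ≤ Mb + b*Mb*K := by
      rw [abs_le]
      constructor <;> linarith
    rw [abs_div, abs_of_nonneg (sq_nonneg (σ t))]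
    exact div_le_div₀ (by positivity) hnum (pow_pos hσ₀ 2) (by nlinarith)
end
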